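/- Suppose p > 1 and a best-worst method matrix on n ≥ 3 alternatives satisfies a_{Bk} ≥ p for all k ≠ B and a_{Wk} ≤ 1/p for all k ≠ W, and all entries are at most p^3. Then for every j ≠ B,W the inequality ∏_{k=1}^n a_{Bk} ≥ (∏_{k≠j} a_{Wk}) · a_{jB}^n · a_{jW}^{n−1} holds. -/

import Mathlib

open Finset

/-- key inequality of the proof of Theorem 1: under the bounds
`a_{Bk} ≥ p`, `a_{Wk} ≤ 1/p` and all entries at most `p^3`, for every `j ≠ B,W`,
`∏_k a_{Bk} ≥ (∏_{k≠j} a_{Wk}) · a_{jB}^n · a_{jW}^{n−1}`. -/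
theorem bwm_key_inequality (n : ℕ) (hn : 3 ≤ n) (p : ℝ) (hp : 1 < p)
    (B W : Fin n) (hBW : B ≠ W)
    (a : Fin n → Fin n → ℝ)
    (hpos : ∀ i j : Fin n, (i = B ∨ i = W ∨ j = B ∨ j = W) → 0 < a i j)
    (hdiag : ∀ i, a i i = 1)
    (hrec : ∀ i j : Fin n, (i = B ∨ i = W ∨ j = B ∨ j = W) → a i j * a j i = 1)
    (hB : ∀ k, k ≠ B → p ≤ a B k)
    (hW : ∀ k, k ≠ W → a W k ≤ 1 / p)
    (hub : ∀ i j : Fin n, (i = B ∨ i = W ∨ j = B ∨ j = W) → a i j ≤ p ^ 3) :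
    ∀ j, j ≠ B → j ≠ W →
      (∏ k ∈ univ.erase j, a W k) * a j B ^ n * a j W ^ (n - 1) ≤ ∏ k, a B k := by
  intro j hjB hjW
  obtain ⟨m, rfl⟩ : ∃ m, n = m + 3 := ⟨n - 3, by omega⟩
  have hp0 : (0:ℝ) < p := lt_trans one_pos hp
  have hp0' : (0:ℝ) < 1 / p := by positivity
  -- a j B ≤ 1/p
  have hajB0 : 0 < a j B := hpos j B (Or.inr (Or.inr (Or.inl rfl)))
  have hajB : a j B ≤ 1 / p := by
    have h := hrec B j (Or.inl rfl)
    have hBj := hB j hjB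
    rw [le_div_iff₀ hp0]
    nlinarith
  have hajW0 : 0 < a j W := hpos j W (Or.inr (Or.inr (Or.inr rfl)))
  have hajW : a j W ≤ p ^ 3 := hub j W (Or.inr (Or.inr (Or.inr rfl)))
  -- product over erase j bound
  have hWmem : W ∈ (univ : Finset (Fin (m+3))).erase j :=
    mem_erase.mpr ⟨Ne.symm hjW, mem_univ W⟩
  have hcard1 : (((univ : Finset (Fin (m+3))).erase j).erase W).card = m + 1 := by
    rw [card_erase_of_mem hWmem, card_erase_of_mem (mem_univ j)]
    simp
  have hprodW : (∏ k ∈ univ.erase j, a W k) ≤ (1 / p) ^ (m + 1) := by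
    rw [← Finset.prod_erase _ (hdiag W), ← hcard1, ← Finset.prod_const]
    refine Finset.prod_le_prod (fun i hi => (hpos W i (Or.inr (Or.inl rfl))).le)
      (fun i hi => hW i ?_)
    exact (mem_erase.mp hi).1
  have hprodW0 : 0 < ∏ k ∈ univ.erase j, a W k :=
    Finset.prod_pos fun i _ => hpos W i (Or.inr (Or.inl rfl))
  -- lower bound on ∏ a B k
  have hcard2 : ((univ : Finset (Fin (m+3))).erase B).card = m + 2 := by
    rw [card_erase_of_mem (mem_univ B)]; simp
  have hprodB : p ^ (m + 2) ≤ ∏ k, a B k := by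
    rw [← Finset.prod_erase _ (hdiag B), ← hcard2, ← Finset.prod_const]
    exact Finset.prod_le_prod (fun i _ => hp0.le)
      (fun i hi => hB i (mem_erase.mp hi).1)
  calc (∏ k ∈ univ.erase j, a W k) * a j B ^ (m+3) * a j W ^ (m + 3 - 1)
      ≤ (1/p) ^ (m+1) * (1/p) ^ (m+3) * (p^3) ^ (m + 3 - 1) := by
        gcongr <;> positivity
    _ = p ^ (m + 2) := by
        have : m + 3 - 1 = m + 2 := rfl
        rw [this]
        have hpne : p ≠ 0 := hp0.ne'
        have k1 : (1/p)^(m+1) * p^(m+1) = 1 := by rw [← mul_pow, one_div_mul_cancel hpne, one_pow]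
        have k2 : (1/p)^(m+3) * p^(m+3) = 1 := by rw [← mul_pow, one_div_mul_cancel hpne, one_pow]
        linear_combination ((1/p)^(m+3) * p^(m+3) * p^(m+2)) * k1 + p^(m+2) * k2
    _ ≤ ∏ k, a B k := hprodB
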